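/- Let N be a single-qubit quantum channel, D_s a unitary 1-design on 2×2 unitary matrices, and χ ∈ (0,1] such that for every nonempty A ⊆ {1,…,n} and every Hermitian O_A that is a real linear combination of Pauli strings with support exactly A: E_{W∼D_s^{⊗n}} ‖N^{†⊗n}(W† O_A W)‖_F² ≤ χ^{2|A|} ‖O_A‖_F². Set p := 1−χ and let Ñ_p be the linear map on 2×2 matrices whose Hilbert–Schmidt adjoint satisfies Ñ_p†(I) = I and Ñ_p†(P) = N†(P)/(1−p) for P ∈ {X,Y,Z}. Then for every Hermitian 2^n×2^n matrix O: E_{V∼D_s^{⊗n}} ‖Ñ_p^{†⊗n}(V† O V)‖_F² ≤ ‖O‖_F². -/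

import Mathlib

open scoped Kronecker
open Matrix
open scoped ComplexOrder

noncomputable section

abbrev QMat := Matrix (Fin 2) (Fin 2) ℂ

abbrev NMat (n : ℕ) := Matrix (Fin n → Fin 2) (Fin n → Fin 2) ℂ

/-- The four single-qubit Pauli matrices `I, X, Y, Z`. -/
def pauli : Fin 4 → QMat :=
  ![1, !![0, 1; 1, 0], !![0, -Complex.I; Complex.I, 0], !![1, 0; 0, -1]]

/-- The non-identity Paulis `X, Y, Z`. -/
def pauliXYZ (i : Fin 3) : QMat := pauli i.succ

/-- The `n`-qubit Pauli string indexed by `s : Fin n → Fin 4`. -/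
def pauliString {n : ℕ} (s : Fin n → Fin 4) : NMat n :=
  Matrix.of fun i j => ∏ k, pauli (s k) (i k) (j k)

/-- Support of a Pauli string. -/
def psupp {n : ℕ} (s : Fin n → Fin 4) : Finset (Fin n) :=
  Finset.univ.filter fun k => s k ≠ 0

/-- The observable with real Pauli coefficients `a`. -/
def obsOf {n : ℕ} (a : (Fin n → Fin 4) → ℝ) : NMat n :=
  ∑ s : Fin n → Fin 4, (a s : ℂ) • pauliString s

/-- Normalized Frobenius norm squared, `‖M‖_F² = Tr[Mᴴ M]/dim`. -/
def frobSq {m : Type*} [Fintype m] (M : Matrix m m ℂ) : ℝ :=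
  (Matrix.trace (Mᴴ * M)).re / (Fintype.card m : ℝ)

def IsUnitary {m : Type*} [Fintype m] [DecidableEq m] (U : Matrix m m ℂ) : Prop :=
  U * Uᴴ = 1 ∧ Uᴴ * U = 1

/-- Hilbert–Schmidt adjoint of a (linear) map on matrices:
`Φ†(A) i j = conj (Tr[Aᴴ Φ(E_{ij})])`. -/
def hsAdj {m : Type*} [Fintype m] [DecidableEq m]
    (Φ : Matrix m m ℂ → Matrix m m ℂ) (A : Matrix m m ℂ) : Matrix m m ℂ :=
  Matrix.of fun i j => (starRingEnd ℂ) (Matrix.trace (Aᴴ * Φ (Matrix.single i j 1)))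

/-- Pauli transfer matrix entry of a single-qubit map. -/
def ptm (Φ : QMat → QMat) (a b : Fin 4) : ℂ :=
  Matrix.trace (pauli a * Φ (pauli b)) / 2

/-- Tensor product `Φ 0 ⊗ Φ 1 ⊗ ⋯ ⊗ Φ (n-1)` of single-qubit (linear) maps,
defined via the Pauli transfer matrices. -/
def tensorMap {n : ℕ} (Φ : Fin n → QMat → QMat) (M : NMat n) : NMat n :=
  ∑ s : Fin n → Fin 4, ∑ t : Fin n → Fin 4,
    ((∏ k, ptm (Φ k) (s k) (t k)) * (Matrix.trace (pauliString t * M) / ((2 : ℂ) ^ n))) •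
      pauliString s

/-- `n`-fold tensor power `Φ^{⊗n}` of a single-qubit (linear) map. -/
def tensorPow (n : ℕ) (Φ : QMat → QMat) : NMat n → NMat n :=
  tensorMap fun _ => Φ

/-- Tensor product of `n` single-qubit matrices. -/
def qprod {n : ℕ} (V : Fin n → QMat) : NMat n :=
  Matrix.of fun i j => ∏ k, V k (i k) (j k)

/-- The single-qubit normal-form map `N'` with parameters `(D, t)`:
`N'(I) = I + Σ t_i σ_i` and `N'(σ_i) = D_i σ_i`. -/
def normalForm (D t : Fin 3 → ℝ) (M : QMat) : QMat :=
  (Matrix.trace M / 2) • (1 + ∑ i, (t i : ℂ) • pauliXYZ i) +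
    ∑ i, ((D i : ℂ) * (Matrix.trace (pauliXYZ i * M) / 2)) • pauliXYZ i

/-- `Υ(D,t) = max_{‖a‖₂=1} Σ_i a_i² D_i² + (Σ_i a_i t_i)²`. -/
def Upsilon (D t : Fin 3 → ℝ) : ℝ :=
  sSup { r : ℝ | ∃ a : Fin 3 → ℝ, (∑ i, a i ^ 2) = 1 ∧
    r = (∑ i, a i ^ 2 * D i ^ 2) + (∑ i, a i * t i) ^ 2 }

/-- Choi matrix of a single-qubit map. -/
def choi (Φ : QMat → QMat) : Matrix (Fin 2 × Fin 2) (Fin 2 × Fin 2) ℂ :=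
  Matrix.of fun p q => Φ (Matrix.single p.1 q.1 1) p.2 q.2

/-- A single-qubit quantum channel: linear, trace preserving, completely positive. -/
structure IsChannel (Φ : QMat → QMat) : Prop where
  linear : IsLinearMap ℂ Φ
  tracePreserving : ∀ M, Matrix.trace (Φ M) = Matrix.trace M
  completelyPositive : (choi Φ).PosSemidef

/-- Unitary 1-design (finitely supported distribution). -/
def IsOneDesign {ι : Type*} [Fintype ι] (w : ι → ℝ) (W : ι → QMat) : Prop :=
  ∀ M : QMat, ∑ i, (w i : ℂ) • (W i * M * (W i)ᴴ) = (Matrix.trace M / 2) • (1 : QMat)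

/-- The swap (flip) operator on two qubits. -/
def swapOp : Matrix (Fin 2 × Fin 2) (Fin 2 × Fin 2) ℂ :=
  Matrix.of fun p q => if p.1 = q.2 ∧ p.2 = q.1 then 1 else 0

/-- Unitary 2-design: the twirl of any `M` matches the Haar value
`c_I • 1 + c_F • F` (closed form of the Haar average on `U(2)`). -/
def IsTwoDesign {ι : Type*} [Fintype ι] (w : ι → ℝ) (W : ι → QMat) : Prop :=
  ∀ M : Matrix (Fin 2 × Fin 2) (Fin 2 × Fin 2) ℂ,
    ∑ i, (w i : ℂ) • ((W i ⊗ₖ W i) * M * (W i ⊗ₖ W i)ᴴ) =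
      ((Matrix.trace M - Matrix.trace (swapOp * M) / 2) / 3) •
          (1 : Matrix (Fin 2 × Fin 2) (Fin 2 × Fin 2) ℂ) +
        ((Matrix.trace (swapOp * M) - Matrix.trace M / 2) / 3) • swapOp

/-- `η`-approximate scrambler (finitely supported distribution over `U(2)`). -/
def IsApproxScrambler {ι : Type*} [Fintype ι] (η : ℝ) (w : ι → ℝ) (U : ι → QMat) : Prop :=
  (∀ a b : Fin 4, a ≠ b →
      ∑ i, (w i : ℂ) • (((U i)ᴴ * pauli a * U i) ⊗ₖ ((U i)ᴴ * pauli b * U i)) = 0) ∧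
    ∀ a b : Fin 3,
      ∑ i, w i * ((Matrix.trace (pauliXYZ a * U i * pauliXYZ b * (U i)ᴴ)).re / 2) ^ 2 ≤
        (1 + 2 * η) / 3

/-- Locally unbiased distribution over linear maps on `n`-qubit matrices. -/
def LocallyUnbiased (n : ℕ) {ι : Type*} [Fintype ι] (w : ι → ℝ)
    (C : ι → NMat n → NMat n) : Prop :=
  ∃ (m : ℕ) (v : Fin n → Fin m → ℝ) (W : Fin n → Fin m → QMat),
    (∀ j k, 0 ≤ v j k) ∧ (∀ j, ∑ k, v j k = 1) ∧ (∀ j k, IsUnitary (W j k)) ∧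
      (∀ j, IsOneDesign (v j) (W j)) ∧
      ∀ A B : NMat n,
        ∑ i, (w i : ℂ) • (C i A ⊗ₖ C i B) =
          ∑ i, ∑ f : Fin n → Fin m,
            ((w i * ∏ j, v j (f j) : ℝ) : ℂ) •
              (C i (qprod (fun j => W j (f j)) * A * (qprod fun j => W j (f j))ᴴ) ⊗ₖ
                C i (qprod (fun j => W j (f j)) * B * (qprod fun j => W j (f j))ᴴ))

/-- Pauli-invariant distribution over linear maps on `n`-qubit matrices. -/
def PauliInvariant (n : ℕ) {ι : Type*} [Fintype ι] (w : ι → ℝ)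
    (C : ι → NMat n → NMat n) : Prop :=
  ∀ A B : NMat n,
    ∑ i, (w i : ℂ) • (C i A ⊗ₖ C i B) =
      ((4 : ℂ) ^ n)⁻¹ • ∑ r : Fin n → Fin 4, ∑ i, (w i : ℂ) •
        (C i (pauliString r * A * pauliString r) ⊗ₖ C i (pauliString r * B * pauliString r))

/-- Fourier coefficient `Φ_γ(C) = Π_j 2^{-n} Tr[P_j C_j(P_{j-1})]` of a Pauli path. -/
def pathCoeff {n L : ℕ} (Cs : Fin L → NMat n → NMat n)
    (γ : Fin (L + 1) → Fin n → Fin 4) : ℂ :=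
  ∏ j : Fin L,
    (Matrix.trace (pauliString (γ j.succ) * Cs j (pauliString (γ j.castSucc))) / ((2 : ℂ) ^ n))

/-- Path weight `|γ| = Σ_{j=1}^L |P_j|`. -/
def pathWeight {n L : ℕ} (γ : Fin (L + 1) → Fin n → Fin 4) : ℕ :=
  ∑ j : Fin L, (psupp (γ j.succ)).card

/-- The (non-physical) map `Ñ_p` with `Ñ_p(I) = (N(I) - pI)/(1-p)` and
`Ñ_p(σ) = N(σ)/(1-p)` for `σ ∈ {X,Y,Z}`. -/
def tildeMap (N : QMat → QMat) (p : ℝ) (M : QMat) : QMat :=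
  (Matrix.trace M / 2) • (((1 : ℂ) - (p : ℂ))⁻¹ • (N 1 - (p : ℂ) • (1 : QMat))) +
    ∑ i : Fin 3, (Matrix.trace (pauliXYZ i * M) / 2) • (((1 : ℂ) - (p : ℂ))⁻¹ • N (pauliXYZ i))

/-- The layers of an `L`-layered noisy circuit: `C_j(ρ) = N^{⊗n}(U_j ρ U_j†)` for `j < L`,
and the last layer is followed by the single-qubit layer `V`. -/
def layerMaps {n L : ℕ} (Nm : QMat → QMat) (U : Fin L → NMat n) (Vt : NMat n)
    (j : Fin L) (ρ : NMat n) : NMat n :=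
  if j.val = L - 1 then Vt * tensorPow n Nm (U j * ρ * (U j)ᴴ) * Vtᴴ
  else tensorPow n Nm (U j * ρ * (U j)ᴴ)

/-- Composition `C_L ∘ ⋯ ∘ C_1` of the layers. -/
def circuitOf {n L : ℕ} (lm : Fin L → NMat n → NMat n) (ρ : NMat n) : NMat n :=
  (List.finRange L).foldl (fun σ j => lm j σ) ρ

/-- Operator (spectral) norm of a matrix, as the `ℓ²→ℓ²` operator norm. -/
def specNorm {m : Type*} [Fintype m] (M : Matrix m m ℂ) : ℝ :=
  Real.sqrt (sSup { r : ℝ | ∃ v : m → ℂ,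
    (∑ x, Complex.normSq (v x)) = 1 ∧ r = ∑ x, Complex.normSq (M.mulVec v x) })

/-- The positive semidefinite square root, as `Matrix.PosSemidef.sqrt` was defined in
Mathlib (Dec 2024); that definition has since been removed. -/
def psdSqrt {m : Type*} [Fintype m] [DecidableEq m] {A : Matrix m m ℂ} (hA : A.PosSemidef) :
    Matrix m m ℂ :=
  hA.1.eigenvectorUnitary.1 * Matrix.diagonal ((↑) ∘ (√·) ∘ hA.1.eigenvalues) *
    (star hA.1.eigenvectorUnitary : Matrix m m ℂ)

/-- Trace norm `‖M‖₁ = Tr √(Mᴴ M)` (sum of singular values). -/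
def traceNorm {m : Type*} [Fintype m] [DecidableEq m] (M : Matrix m m ℂ) : ℝ :=
  (Matrix.trace (psdSqrt (Matrix.posSemidef_conjTranspose_mul_self M))).re

-- ===== auxiliary lemmas =====

lemma pauli_zero : pauli 0 = 1 := rfl

lemma pauli_conjT (a : Fin 4) : (pauli a)ᴴ = pauli a := by
  fin_cases a <;> ext i j <;> fin_cases i <;> fin_cases j <;>
    simp [pauli, Matrix.conjTranspose_apply, Matrix.one_apply]

lemma trace_pauli (a : Fin 4) : Matrix.trace (pauli a) = if a = 0 then 2 else 0 := by
  fin_cases a <;>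
    simp [pauli, Matrix.trace, Matrix.diag, Fin.sum_univ_two, Matrix.one_apply]

lemma trace_pauli_mul (a b : Fin 4) :
    Matrix.trace (pauli a * pauli b) = if a = b then 2 else 0 := by
  fin_cases a <;> fin_cases b <;>
    simp [pauli, Matrix.trace, Matrix.diag, Matrix.mul_apply, Fin.sum_univ_two,
      Matrix.one_apply, Complex.ext_iff] <;> norm_num


lemma qprod_mul {n : ℕ} (F G : Fin n → QMat) :
    qprod F * qprod G = qprod fun k => F k * G k := by
  ext i j
  simp only [qprod, Matrix.mul_apply, Matrix.of_apply]
  rw [Fintype.prod_sum fun k x => F k (i k) x * G k x (j k)]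
  exact Finset.sum_congr rfl fun x _ => (Finset.prod_mul_distrib).symm

lemma trace_qprod {n : ℕ} (F : Fin n → QMat) :
    Matrix.trace (qprod F) = ∏ k, Matrix.trace (F k) := by
  simp only [Matrix.trace, Matrix.diag, qprod, Matrix.of_apply]
  rw [Fintype.prod_sum fun k x => F k x x]

lemma qprod_conjT {n : ℕ} (F : Fin n → QMat) :
    (qprod F)ᴴ = qprod fun k => (F k)ᴴ := by
  ext i j
  simp [qprod, Matrix.conjTranspose_apply, map_prod]

lemma pauliString_eq_qprod {n : ℕ} (s : Fin n → Fin 4) :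
    pauliString s = qprod fun k => pauli (s k) := rfl

lemma pauliString_conjT {n : ℕ} (s : Fin n → Fin 4) :
    (pauliString s)ᴴ = pauliString s := by
  rw [pauliString_eq_qprod, qprod_conjT]
  simp [pauli_conjT]

lemma trace_pauliString_mul {n : ℕ} (s t : Fin n → Fin 4) :
    Matrix.trace (pauliString s * pauliString t) = if s = t then (2:ℂ)^n else 0 := by
  rw [pauliString_eq_qprod, pauliString_eq_qprod, qprod_mul, trace_qprod]
  by_cases h : s = t
  · subst h
    simp [trace_pauli_mul]
  · obtain ⟨k, hk⟩ := Function.ne_iff.mp h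
    rw [if_neg h]
    apply Finset.prod_eq_zero (Finset.mem_univ k)
    rw [trace_pauli_mul, if_neg hk]


/-- Pauli coefficient of a matrix. -/
def coeff {n : ℕ} (t : Fin n → Fin 4) (M : NMat n) : ℂ :=
  Matrix.trace (pauliString t * M) / (2:ℂ)^n

lemma two_pow_ne : ((2:ℂ)^n) ≠ 0 := by positivity

lemma coeff_sum_smul {n : ℕ} (c : (Fin n → Fin 4) → ℂ) (t : Fin n → Fin 4) :
    coeff t (∑ s, c s • pauliString s) = c t := by
  simp only [coeff, Matrix.mul_sum, Matrix.mul_smul, Matrix.trace_sum, Matrix.trace_smul,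
    trace_pauliString_mul, smul_eq_mul]
  rw [Finset.sum_congr rfl (g := fun s => if t = s then c s * 2^n else 0)
    (fun s _ => by by_cases h : t = s <;> simp [h, eq_comm]),
    Finset.sum_ite_eq]
  simp [two_pow_ne]

lemma frobSq_sum_smul {n : ℕ} (c : (Fin n → Fin 4) → ℂ) :
    frobSq (∑ s, c s • pauliString s) = ∑ s, Complex.normSq (c s) := by
  have hT : (∑ s, c s • pauliString s)ᴴ = ∑ s, (starRingEnd ℂ) (c s) • pauliString s := by
    simp [Matrix.conjTranspose_sum, Matrix.conjTranspose_smul, pauliString_conjT]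
  rw [frobSq, hT, Finset.sum_mul_sum]
  have : ∀ s t : Fin n → Fin 4,
      Matrix.trace (((starRingEnd ℂ) (c s) • pauliString s) * (c t • pauliString t)) =
        if s = t then (starRingEnd ℂ) (c s) * c t * 2^n else 0 := by
    intro s t
    rw [Matrix.smul_mul, Matrix.mul_smul, Matrix.trace_smul, Matrix.trace_smul,
      trace_pauliString_mul]
    by_cases h : s = t <;> simp [h, mul_comm, mul_assoc, mul_left_comm]
  rw [Matrix.trace_sum]
  simp_rw [Matrix.trace_sum, this, Finset.sum_ite_eq, Finset.mem_univ, if_pos]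
  have : (∑ s, (starRingEnd ℂ) (c s) * c s * 2^n) =
      ((∑ s, (Complex.normSq (c s) : ℝ) : ℝ) : ℂ) * 2^n := by
    push_cast
    rw [Finset.sum_mul]
    exact Finset.sum_congr rfl fun s _ => by
      rw [mul_comm ((starRingEnd ℂ) (c s)), Complex.mul_conj]
  rw [this]
  have hcard : (Fintype.card (Fin n → Fin 2) : ℝ) = 2^n := by
    simp [Fintype.card_fun]
  rw [hcard, show ((2:ℂ)^n) = (((2:ℝ)^n : ℝ) : ℂ) by push_cast; ring, ← Complex.ofReal_mul,
    Complex.ofReal_re, mul_div_assoc, div_self (by positivity), mul_one]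


lemma tensorMap_eq {n : ℕ} (Φ : Fin n → QMat → QMat) (M : NMat n) :
    tensorMap Φ M
      = ∑ s, (∑ t, (∏ k, ptm (Φ k) (s k) (t k)) * coeff t M) • pauliString s := by
  unfold tensorMap coeff
  exact Finset.sum_congr rfl fun s _ => (Finset.sum_smul).symm

lemma frobSq_tensorMap {n : ℕ} (Φ : Fin n → QMat → QMat) (M : NMat n) :
    frobSq (tensorMap Φ M)
      = ∑ s : Fin n → Fin 4, Complex.normSq (∑ t, (∏ k, ptm (Φ k) (s k) (t k)) * coeff t M) := by
  rw [tensorMap_eq, frobSq_sum_smul]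

lemma conj_coeff {n : ℕ} (t : Fin n → Fin 4) (M : NMat n) (hM : Mᴴ = M) :
    (starRingEnd ℂ) (coeff t M) = coeff t M := by
  rw [coeff, map_div₀]
  congr 1
  · rw [starRingEnd_apply, ← Matrix.trace_conjTranspose, Matrix.conjTranspose_mul,
      pauliString_conjT, hM, Matrix.trace_mul_comm]
  · rw [show ((2:ℂ)^n) = (((2:ℝ)^n : ℝ) : ℂ) by push_cast; ring, Complex.conj_ofReal]

lemma conj_sandwich {n : ℕ} (V O : NMat n) (hO : Oᴴ = O) : (Vᴴ * O * V)ᴴ = Vᴴ * O * V := by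
  rw [Matrix.conjTranspose_mul, Matrix.conjTranspose_mul, hO, Matrix.conjTranspose_conjTranspose,
    Matrix.mul_assoc]

lemma obsOf_herm {n : ℕ} (a : (Fin n → Fin 4) → ℝ) : (obsOf a)ᴴ = obsOf a := by
  simp [obsOf, Matrix.conjTranspose_sum, Matrix.conjTranspose_smul, pauliString_conjT,
    Complex.conj_ofReal]

lemma trace_pauli_conj_pauli {n : ℕ} (V : Fin n → QMat) (s t : Fin n → Fin 4) :
    Matrix.trace (pauliString t * ((qprod V)ᴴ * pauliString s * qprod V)) =
      ∏ k, Matrix.trace (pauli (t k) * ((V k)ᴴ * pauli (s k) * V k)) := by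
  rw [pauliString_eq_qprod, pauliString_eq_qprod, qprod_conjT, qprod_mul, qprod_mul, qprod_mul,
    trace_qprod]

lemma psupp_ne_witness {n : ℕ} {s t : Fin n → Fin 4} (h : psupp s ≠ psupp t) :
    ∃ k, (s k = 0 ∧ t k ≠ 0) ∨ (s k ≠ 0 ∧ t k = 0) := by
  by_contra hc
  push_neg at hc
  apply h
  ext k
  simp only [psupp, Finset.mem_filter, Finset.mem_univ, true_and]
  obtain ⟨h1, h2⟩ := hc k
  tauto

lemma trace_pauli_conj_pauli_zero {n : ℕ} (V : Fin n → QMat) (hu : ∀ k, IsUnitary (V k))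
    {s t : Fin n → Fin 4} (h : psupp s ≠ psupp t) :
    Matrix.trace (pauliString t * ((qprod V)ᴴ * pauliString s * qprod V)) = 0 := by
  rw [trace_pauli_conj_pauli]
  obtain ⟨k, hk⟩ := psupp_ne_witness h
  apply Finset.prod_eq_zero (Finset.mem_univ k)
  rcases hk with ⟨hs, ht⟩ | ⟨hs, ht⟩
  · rw [hs, pauli_zero, Matrix.mul_one, (hu k).2, Matrix.mul_one, trace_pauli, if_neg ht]
  · rw [ht, pauli_zero, Matrix.one_mul, Matrix.trace_mul_comm, ← Matrix.mul_assoc,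
      (hu k).1, Matrix.one_mul, trace_pauli, if_neg hs]


lemma coeff_conj_obs_expand {n : ℕ} (V : NMat n) (c : (Fin n → Fin 4) → ℝ)
    (t : Fin n → Fin 4) :
    coeff t (Vᴴ * obsOf c * V) = ∑ s, (c s : ℂ) *
      (Matrix.trace (pauliString t * (Vᴴ * pauliString s * V)) / (2:ℂ)^n) := by
  simp only [coeff, obsOf, Matrix.mul_sum, Matrix.sum_mul, Matrix.mul_smul, Matrix.smul_mul,
    Matrix.trace_sum, Matrix.trace_smul, smul_eq_mul, Finset.sum_div]
  exact Finset.sum_congr rfl fun s _ => (mul_div_assoc _ _ _)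

lemma coeff_conj_obs_restrict {n : ℕ} (V : Fin n → QMat) (hu : ∀ k, IsUnitary (V k))
    (c : (Fin n → Fin 4) → ℝ) (A : Finset (Fin n)) (t : Fin n → Fin 4) :
    coeff t ((qprod V)ᴴ * obsOf (fun s => if psupp s = A then c s else 0) * qprod V)
      = if psupp t = A then coeff t ((qprod V)ᴴ * obsOf c * qprod V) else 0 := by
  by_cases h : psupp t = A
  · rw [if_pos h, coeff_conj_obs_expand, coeff_conj_obs_expand]
    refine Finset.sum_congr rfl fun s _ => ?_
    by_cases hs : psupp s = A
    · rw [if_pos hs]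
    · rw [if_neg hs, trace_pauli_conj_pauli_zero V hu (fun e => hs (e.trans h))]
      simp
  · rw [if_neg h, coeff_conj_obs_expand]
    refine Finset.sum_eq_zero fun s _ => ?_
    by_cases hs : psupp s = A
    · rw [trace_pauli_conj_pauli_zero V hu (fun e => h (e.symm.trans hs))]
      simp
    · rw [if_neg hs]
      simp

lemma coeff_conj_entry {n : ℕ} (V : Fin n → QMat) (t : Fin n → Fin 4) (O : NMat n) :
    coeff t ((qprod V)ᴴ * O * qprod V)
      = (∑ i : Fin n → Fin 2, ∑ j : Fin n → Fin 2,
          (∏ k, (V k * pauli (t k) * (V k)ᴴ) (i k) (j k)) * O j i) / (2:ℂ)^n := by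
  unfold coeff
  rw [show pauliString t * ((qprod V)ᴴ * O * qprod V)
      = (pauliString t * (qprod V)ᴴ * O) * qprod V by simp [Matrix.mul_assoc],
    Matrix.trace_mul_comm,
    show qprod V * (pauliString t * (qprod V)ᴴ * O)
      = (qprod V * pauliString t * (qprod V)ᴴ) * O by simp [Matrix.mul_assoc],
    pauliString_eq_qprod, qprod_mul, qprod_conjT, qprod_mul]
  congr 1


lemma sum_w_prod_mul {n : ℕ} {ι : Type*} [Fintype ι] (w : ι → ℝ) (F G : Fin n → ι → ℂ) :
    ∑ f : Fin n → ι, (∏ k, (w (f k) : ℂ)) * ((∏ k, F k (f k)) * (∏ k, G k (f k)))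
      = ∏ k, (∑ m, (w m : ℂ) * (F k m * G k m)) := by
  rw [Fintype.prod_sum fun k m => (w m : ℂ) * (F k m * G k m)]
  refine Finset.sum_congr rfl fun f _ => ?_
  rw [Finset.prod_mul_distrib, Finset.prod_mul_distrib]

lemma design_entry_zero {ι : Type*} [Fintype ι] {w : ι → ℝ} {W : ι → QMat}
    (hdes : IsOneDesign w W) {b : Fin 4} (hb : b ≠ 0) (x y : Fin 2) :
    ∑ m, (w m : ℂ) * ((W m * pauli b * (W m)ᴴ) x y) = 0 := by
  have h := congrArg (fun M : QMat => M x y) (hdes (pauli b))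
  simp only [Matrix.sum_apply, Matrix.smul_apply, smul_eq_mul, trace_pauli, if_neg hb,
    zero_div, zero_smul, Matrix.zero_apply, zero_mul] at h
  simpa using h

lemma design_cross {n : ℕ} {ι : Type*} [Fintype ι] {w : ι → ℝ} {W : ι → QMat}
    (hWu : ∀ i, IsUnitary (W i)) (hdes : IsOneDesign w W) (O : NMat n)
    {t t' : Fin n → Fin 4} (h : psupp t ≠ psupp t') :
    ∑ f : Fin n → ι, (∏ k, (w (f k) : ℂ)) *
      (coeff t ((qprod fun k => W (f k))ᴴ * O * qprod fun k => W (f k)) *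
       coeff t' ((qprod fun k => W (f k))ᴴ * O * qprod fun k => W (f k))) = 0 := by
  classical
  have key : ∀ f : Fin n → ι,
      coeff t ((qprod fun k => W (f k))ᴴ * O * qprod fun k => W (f k)) *
        coeff t' ((qprod fun k => W (f k))ᴴ * O * qprod fun k => W (f k))
      = ∑ p : (Fin n → Fin 2) × (Fin n → Fin 2),
          ∑ q : (Fin n → Fin 2) × (Fin n → Fin 2),
          (O p.2 p.1 * O q.2 q.1 / ((2:ℂ)^n * 2^n)) *
            ((∏ k, (W (f k) * pauli (t k) * (W (f k))ᴴ) (p.1 k) (p.2 k)) *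
             (∏ k, (W (f k) * pauli (t' k) * (W (f k))ᴴ) (q.1 k) (q.2 k))) := by
    intro f
    rw [coeff_conj_entry, coeff_conj_entry, div_mul_div_comm,
      ← Fintype.sum_prod_type' (fun i j : Fin n → Fin 2 =>
          (∏ k, (W (f k) * pauli (t k) * (W (f k))ᴴ) (i k) (j k)) * O j i),
      ← Fintype.sum_prod_type' (fun i j : Fin n → Fin 2 =>
          (∏ k, (W (f k) * pauli (t' k) * (W (f k))ᴴ) (i k) (j k)) * O j i),
      Finset.sum_mul_sum]
    simp only [Finset.sum_div]
    refine Finset.sum_congr rfl fun p _ => Finset.sum_congr rfl fun q _ => ?_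
    ring
  simp only [key, Finset.mul_sum]
  rw [Finset.sum_comm]
  refine Finset.sum_eq_zero fun p _ => ?_
  rw [Finset.sum_comm]
  refine Finset.sum_eq_zero fun q _ => ?_
  have step : ∀ f : Fin n → ι, (∏ k, (w (f k) : ℂ)) *
      ((O p.2 p.1 * O q.2 q.1 / ((2:ℂ)^n * 2^n)) *
        ((∏ k, (W (f k) * pauli (t k) * (W (f k))ᴴ) (p.1 k) (p.2 k)) *
         (∏ k, (W (f k) * pauli (t' k) * (W (f k))ᴴ) (q.1 k) (q.2 k))))
      = (O p.2 p.1 * O q.2 q.1 / ((2:ℂ)^n * 2^n)) *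
        ((∏ k, (w (f k) : ℂ)) *
          ((∏ k, (W (f k) * pauli (t k) * (W (f k))ᴴ) (p.1 k) (p.2 k)) *
           (∏ k, (W (f k) * pauli (t' k) * (W (f k))ᴴ) (q.1 k) (q.2 k)))) := by
    intro f; ring
  simp only [step]
  rw [← Finset.mul_sum,
    sum_w_prod_mul w (fun k m => (W m * pauli (t k) * (W m)ᴴ) (p.1 k) (p.2 k))
      (fun k m => (W m * pauli (t' k) * (W m)ᴴ) (q.1 k) (q.2 k))]
  obtain ⟨k0, hk0⟩ := psupp_ne_witness h
  have hzero : (∑ m, (w m : ℂ) *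
      ((W m * pauli (t k0) * (W m)ᴴ) (p.1 k0) (p.2 k0) *
       (W m * pauli (t' k0) * (W m)ᴴ) (q.1 k0) (q.2 k0))) = 0 := by
    rcases hk0 with ⟨ht, ht'⟩ | ⟨ht, ht'⟩
    · have hconst : ∀ m, (W m * pauli (t k0) * (W m)ᴴ) (p.1 k0) (p.2 k0)
          = (1 : QMat) (p.1 k0) (p.2 k0) := by
        intro m; rw [ht, pauli_zero, Matrix.mul_one, (hWu m).1]
      have hre : ∀ m : ι, (w m : ℂ) * ((W m * pauli (t k0) * (W m)ᴴ) (p.1 k0) (p.2 k0) *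
          (W m * pauli (t' k0) * (W m)ᴴ) (q.1 k0) (q.2 k0))
          = (1 : QMat) (p.1 k0) (p.2 k0) *
            ((w m : ℂ) * (W m * pauli (t' k0) * (W m)ᴴ) (q.1 k0) (q.2 k0)) := by
        intro m; rw [hconst m]; ring
      simp only [hre]
      rw [← Finset.mul_sum, design_entry_zero hdes ht' _ _, mul_zero]
    · have hconst : ∀ m, (W m * pauli (t' k0) * (W m)ᴴ) (q.1 k0) (q.2 k0)
          = (1 : QMat) (q.1 k0) (q.2 k0) := by
        intro m; rw [ht', pauli_zero, Matrix.mul_one, (hWu m).1]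
      have hre : ∀ m : ι, (w m : ℂ) * ((W m * pauli (t k0) * (W m)ᴴ) (p.1 k0) (p.2 k0) *
          (W m * pauli (t' k0) * (W m)ᴴ) (q.1 k0) (q.2 k0))
          = (1 : QMat) (q.1 k0) (q.2 k0) *
            ((w m : ℂ) * (W m * pauli (t k0) * (W m)ᴴ) (p.1 k0) (p.2 k0)) := by
        intro m; rw [hconst m]; ring
      simp only [hre]
      rw [← Finset.mul_sum, design_entry_zero hdes ht _ _, mul_zero]
  rw [Finset.prod_eq_zero (Finset.mem_univ k0) hzero, mul_zero]


lemma hsAdj_one {N : QMat → QMat} (hNtr : ∀ M, Matrix.trace (N M) = Matrix.trace M) :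
    hsAdj N 1 = 1 := by
  ext i j
  simp only [hsAdj, Matrix.of_apply, Matrix.conjTranspose_one, Matrix.one_mul, hNtr]
  have : Matrix.trace (Matrix.single i j (1:ℂ)) = if i = j then 1 else 0 := by
    simp only [Matrix.trace, Matrix.diag, Matrix.single, Matrix.of_apply]
    by_cases h : i = j
    · subst h; simp
    · rw [if_neg h]
      exact Finset.sum_eq_zero fun x _ => by
        by_cases hx : i = x
        · subst hx; simp [fun e : j = i => h e.symm, Ne.symm h]
        · simp [hx]
  rw [this]
  by_cases h : i = j <;> simp [h, Matrix.one_apply]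

section ptmrel

variable {N : QMat → QMat} {χ p : ℝ} {tAdj : QMat → QMat}

lemma ptm_rel (hNtr : ∀ M, Matrix.trace (N M) = Matrix.trace M) (hp : p = 1 - χ)
    (htAdj : ∀ M, tAdj M = (Matrix.trace M / 2) • (1 : QMat) +
      ∑ i : Fin 3, (Matrix.trace (pauliXYZ i * M) / 2) •
        (((1 : ℂ) - (p : ℂ))⁻¹ • hsAdj N (pauliXYZ i)))
    (a b : Fin 4) :
    ptm tAdj a b = (if b = 0 then 1 else ((χ:ℝ):ℂ)⁻¹) * ptm (hsAdj N) a b := by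
  have hχc : ((1:ℂ) - (p:ℂ)) = ((χ:ℝ):ℂ) := by
    rw [hp]; push_cast; ring
  induction b using Fin.cases with
  | zero =>
    have h1 : tAdj (pauli 0) = 1 := by
      rw [htAdj, pauli_zero]
      have h2 : ∀ i : Fin 3, Matrix.trace (pauliXYZ i) = 0 := by
        intro i
        rw [pauliXYZ, trace_pauli, if_neg (Fin.succ_ne_zero i)]
      simp [h2, Matrix.trace_one]
    rw [ptm, ptm, h1, pauli_zero, hsAdj_one hNtr, if_pos rfl, one_mul]
  | succ j =>
    have h1 : tAdj (pauli j.succ) = ((χ:ℝ):ℂ)⁻¹ • hsAdj N (pauliXYZ j) := by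
      rw [htAdj]
      have htr : Matrix.trace (pauli j.succ) = 0 := by
        rw [trace_pauli, if_neg (Fin.succ_ne_zero j)]
      have hterm : ∀ i : Fin 3, (Matrix.trace (pauliXYZ i * pauli j.succ) / 2) •
          (((1 : ℂ) - (p : ℂ))⁻¹ • hsAdj N (pauliXYZ i))
          = if i = j then ((χ:ℝ):ℂ)⁻¹ • hsAdj N (pauliXYZ i) else 0 := by
        intro i
        rw [pauliXYZ, trace_pauli_mul]
        by_cases h : i = j
        · subst h; rw [if_pos rfl, if_pos rfl]
          norm_num [hχc]
        · rw [if_neg (fun e : i.succ = j.succ => h (Fin.succ_inj.mp e)), if_neg h]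
          simp
      rw [htr]
      simp only [hterm]
      rw [Finset.sum_ite_eq' Finset.univ j fun i => ((χ:ℝ):ℂ)⁻¹ • hsAdj N (pauliXYZ i)]
      simp
    rw [ptm, ptm, h1, Matrix.mul_smul, Matrix.trace_smul, if_neg (Fin.succ_ne_zero j)]
    rw [smul_eq_mul, pauliXYZ, mul_div_assoc]

lemma prod_ptm_tAdj (hNtr : ∀ M, Matrix.trace (N M) = Matrix.trace M) (hp : p = 1 - χ)
    (htAdj : ∀ M, tAdj M = (Matrix.trace M / 2) • (1 : QMat) +
      ∑ i : Fin 3, (Matrix.trace (pauliXYZ i * M) / 2) •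
        (((1 : ℂ) - (p : ℂ))⁻¹ • hsAdj N (pauliXYZ i)))
    {n : ℕ} (s t : Fin n → Fin 4) :
    (∏ k, ptm tAdj (s k) (t k))
      = (((χ:ℝ):ℂ)⁻¹)^(psupp t).card * ∏ k, ptm (hsAdj N) (s k) (t k) := by
  simp only [ptm_rel hNtr hp htAdj]
  rw [Finset.prod_mul_distrib]
  congr 1
  rw [Finset.prod_ite (fun _ => (1:ℂ)) (fun _ => ((χ:ℝ):ℂ)⁻¹), Finset.prod_const_one, one_mul,
    Finset.prod_const]
  congr 1

end ptmrel


lemma rearrange {F S T4 : Type*} [Fintype F] [Fintype S] [Fintype T4]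
    (u : F → ℂ) (T : S → T4 → ℂ) (c : T4 → F → ℂ)
    (hc : ∀ t f, (starRingEnd ℂ) (c t f) = c t f) :
    ∑ f, u f * ∑ s, ((starRingEnd ℂ) (∑ t, T s t * c t f) * (∑ t, T s t * c t f))
      = ∑ t, ∑ t', (∑ s, (starRingEnd ℂ) (T s t) * T s t')
          * (∑ f, u f * (c t f * c t' f)) := by
  have lhs_eq : ∑ f, u f * ∑ s, ((starRingEnd ℂ) (∑ t, T s t * c t f) * (∑ t, T s t * c t f))
      = ∑ s, ∑ t, ∑ t', ∑ f,
          u f * (((starRingEnd ℂ) (T s t) * c t f) * (T s t' * c t' f)) := by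
    simp only [map_sum, _root_.map_mul, hc, Finset.sum_mul_sum, Finset.mul_sum, Finset.sum_mul]
    rw [Finset.sum_comm]
    refine Finset.sum_congr rfl fun s _ => ?_
    rw [Finset.sum_comm]
    refine Eq.trans (Finset.sum_congr rfl fun t' _ => Finset.sum_comm) ?_
    rw [Finset.sum_comm]
  have rhs_eq : (∑ t, ∑ t', (∑ s, (starRingEnd ℂ) (T s t) * T s t')
          * (∑ f, u f * (c t f * c t' f)))
      = ∑ s, ∑ t, ∑ t', ∑ f,
          u f * (((starRingEnd ℂ) (T s t) * c t f) * (T s t' * c t' f)) := by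
    simp only [Finset.sum_mul_sum]
    refine Eq.trans (Finset.sum_congr rfl fun t _ => Finset.sum_comm) ?_
    rw [Finset.sum_comm]
    refine Finset.sum_congr rfl fun s _ => Finset.sum_congr rfl fun t _ =>
      Finset.sum_congr rfl fun t' _ => Finset.sum_congr rfl fun f _ => by ring
  rw [lhs_eq, rhs_eq]


lemma ofReal_normSq_sum {α : Type*} [Fintype α] (d : α → ℂ) :
    ((∑ x, Complex.normSq (d x) : ℝ) : ℂ) = ∑ x, (starRingEnd ℂ) (d x) * d x := by
  push_cast
  refine Finset.sum_congr rfl fun x _ => ?_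
  rw [mul_comm]
  exact (Complex.mul_conj _).symm

lemma ofReal_sum_w_frob {n : ℕ} {ι : Type*} [Fintype ι] (w : ι → ℝ) (Φ : QMat → QMat)
    (M : (Fin n → ι) → NMat n) :
    ((∑ f : Fin n → ι, (∏ k, w (f k)) * frobSq (tensorPow n Φ (M f)) : ℝ) : ℂ)
      = ∑ f : Fin n → ι, (∏ k, (w (f k) : ℂ)) *
          ∑ s : Fin n → Fin 4,
            ((starRingEnd ℂ) (∑ t, (∏ k, ptm Φ (s k) (t k)) * coeff t (M f)) *
              (∑ t, (∏ k, ptm Φ (s k) (t k)) * coeff t (M f))) := by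
  rw [Complex.ofReal_sum]
  refine Finset.sum_congr rfl fun f _ => ?_
  rw [show tensorPow n Φ (M f) = tensorMap (fun _ => Φ) (M f) from rfl, Complex.ofReal_mul,
    frobSq_tensorMap, ofReal_normSq_sum, Complex.ofReal_prod]

lemma psupp_eq_empty_iff {n : ℕ} (t : Fin n → Fin 4) :
    psupp t = ∅ ↔ t = fun _ => 0 := by
  simp [psupp, Finset.filter_eq_empty_iff, funext_iff]

lemma ptm_hsAdj_zero {N : QMat → QMat} (hNtr : ∀ M, Matrix.trace (N M) = Matrix.trace M)
    (x : Fin 4) : ptm (hsAdj N) x 0 = if x = 0 then 1 else 0 := by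
  rw [ptm, pauli_zero, hsAdj_one hNtr, Matrix.mul_one, trace_pauli]
  by_cases h : x = 0 <;> simp [h]

lemma sum_prod_w {n : ℕ} {ι : Type*} [Fintype ι] {w : ι → ℝ} (hw1 : ∑ i, w i = 1) :
    ∑ f : Fin n → ι, ∏ k, w (f k) = 1 := by
  rw [← Fintype.prod_sum fun (_ : Fin n) m => w m]
  simp [hw1]


lemma main_identity {n : ℕ} {ι : Type*} [Fintype ι] (w : ι → ℝ) (W : ι → QMat)
    (hWu : ∀ i, IsUnitary (W i)) (hdes : IsOneDesign w W)
    {N tAdj : QMat → QMat} (hNtr : ∀ M, Matrix.trace (N M) = Matrix.trace M)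
    {χ p : ℝ} (hp : p = 1 - χ)
    (htAdj : ∀ M, tAdj M = (Matrix.trace M / 2) • (1 : QMat) +
      ∑ i : Fin 3, (Matrix.trace (pauliXYZ i * M) / 2) •
        (((1 : ℂ) - (p : ℂ))⁻¹ • hsAdj N (pauliXYZ i)))
    (a : (Fin n → Fin 4) → ℝ) :
    ((∑ f : Fin n → ι, (∏ k, w (f k)) * frobSq (tensorPow n tAdj
        ((qprod fun k => W (f k))ᴴ * obsOf a * qprod fun k => W (f k))) : ℝ) : ℂ)
      = ∑ A : Finset (Fin n), ((((χ:ℝ):ℂ))⁻¹)^(2 * A.card) *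
          ((∑ f : Fin n → ι, (∏ k, w (f k)) * frobSq (tensorPow n (hsAdj N)
            ((qprod fun k => W (f k))ᴴ * obsOf (fun s => if psupp s = A then a s else 0) *
              qprod fun k => W (f k))) : ℝ) : ℂ) := by
  classical
  have hcj : ∀ (b : (Fin n → Fin 4) → ℝ) (t : Fin n → Fin 4) (f : Fin n → ι),
      (starRingEnd ℂ) (coeff t ((qprod fun k => W (f k))ᴴ * obsOf b * qprod fun k => W (f k)))
        = coeff t ((qprod fun k => W (f k))ᴴ * obsOf b * qprod fun k => W (f k)) :=
    fun b t f => conj_coeff _ _ (conj_sandwich _ _ (obsOf_herm b))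
  rw [ofReal_sum_w_frob]
  simp only [prod_ptm_tAdj hNtr hp htAdj]
  rw [rearrange (fun f : Fin n → ι => ∏ k, (w (f k) : ℂ))
    (fun s t : Fin n → Fin 4 =>
      ((((χ:ℝ):ℂ))⁻¹)^(psupp t).card * ∏ k, ptm (hsAdj N) (s k) (t k))
    (fun t f => coeff t ((qprod fun k => W (f k))ᴴ * obsOf a * qprod fun k => W (f k)))
    (fun t f => hcj a t f)]
  have hRHS : ∀ A : Finset (Fin n),
      ((∑ f : Fin n → ι, (∏ k, w (f k)) * frobSq (tensorPow n (hsAdj N)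
          ((qprod fun k => W (f k))ᴴ * obsOf (fun s => if psupp s = A then a s else 0) *
            qprod fun k => W (f k))) : ℝ) : ℂ)
        = ∑ t : Fin n → Fin 4, ∑ t' : Fin n → Fin 4,
            (∑ s : Fin n → Fin 4, (starRingEnd ℂ) (∏ k, ptm (hsAdj N) (s k) (t k)) *
              ∏ k, ptm (hsAdj N) (s k) (t' k)) *
            (if psupp t = A ∧ psupp t' = A then
              (∑ f : Fin n → ι, (∏ k, (w (f k) : ℂ)) *
                (coeff t ((qprod fun k => W (f k))ᴴ * obsOf a * qprod fun k => W (f k)) *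
                 coeff t' ((qprod fun k => W (f k))ᴴ * obsOf a * qprod fun k => W (f k))))
             else 0) := by
    intro A
    rw [ofReal_sum_w_frob, rearrange (fun f : Fin n → ι => ∏ k, (w (f k) : ℂ))
      (fun s t : Fin n → Fin 4 => ∏ k, ptm (hsAdj N) (s k) (t k))
      (fun t f => coeff t ((qprod fun k => W (f k))ᴴ *
        obsOf (fun s => if psupp s = A then a s else 0) * qprod fun k => W (f k)))
      (fun t f => hcj _ t f)]
    refine Finset.sum_congr rfl fun t _ => Finset.sum_congr rfl fun t' _ => ?_
    congr 1
    by_cases h : psupp t = A ∧ psupp t' = A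
    · rw [if_pos h]
      refine Finset.sum_congr rfl fun f _ => ?_
      rw [coeff_conj_obs_restrict _ (fun k => hWu (f k)) a A t,
        coeff_conj_obs_restrict _ (fun k => hWu (f k)) a A t', if_pos h.1, if_pos h.2]
    · rw [if_neg h]
      refine Finset.sum_eq_zero fun f _ => ?_
      rw [coeff_conj_obs_restrict _ (fun k => hWu (f k)) a A t,
        coeff_conj_obs_restrict _ (fun k => hWu (f k)) a A t']
      rcases not_and_or.mp h with h1 | h1
      · rw [if_neg h1, zero_mul, mul_zero]
      · rw [if_neg h1, mul_zero, mul_zero]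
  have step : ∀ t t' : Fin n → Fin 4,
      (∑ s : Fin n → Fin 4,
          (starRingEnd ℂ) (((((χ:ℝ):ℂ))⁻¹)^(psupp t).card * ∏ k, ptm (hsAdj N) (s k) (t k)) *
            (((((χ:ℝ):ℂ))⁻¹)^(psupp t').card * ∏ k, ptm (hsAdj N) (s k) (t' k))) *
        (∑ f : Fin n → ι, (∏ k, (w (f k) : ℂ)) *
          (coeff t ((qprod fun k => W (f k))ᴴ * obsOf a * qprod fun k => W (f k)) *
           coeff t' ((qprod fun k => W (f k))ᴴ * obsOf a * qprod fun k => W (f k))))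
      = ∑ A : Finset (Fin n), ((((χ:ℝ):ℂ))⁻¹)^(2 * A.card) *
          ((∑ s : Fin n → Fin 4, (starRingEnd ℂ) (∏ k, ptm (hsAdj N) (s k) (t k)) *
              ∏ k, ptm (hsAdj N) (s k) (t' k)) *
            (if psupp t = A ∧ psupp t' = A then
              (∑ f : Fin n → ι, (∏ k, (w (f k) : ℂ)) *
                (coeff t ((qprod fun k => W (f k))ᴴ * obsOf a * qprod fun k => W (f k)) *
                 coeff t' ((qprod fun k => W (f k))ᴴ * obsOf a * qprod fun k => W (f k))))
             else 0)) := by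
    intro t t'
    by_cases h : psupp t = psupp t'
    · rw [Finset.sum_eq_single (psupp t)]
      · rw [if_pos ⟨rfl, h.symm⟩]
        have hcoef : ∀ s : Fin n → Fin 4,
            (starRingEnd ℂ) (((((χ:ℝ):ℂ))⁻¹)^(psupp t).card * ∏ k, ptm (hsAdj N) (s k) (t k)) *
              (((((χ:ℝ):ℂ))⁻¹)^(psupp t').card * ∏ k, ptm (hsAdj N) (s k) (t' k))
            = ((((χ:ℝ):ℂ))⁻¹)^(2 * (psupp t).card) *
              ((starRingEnd ℂ) (∏ k, ptm (hsAdj N) (s k) (t k)) *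
                ∏ k, ptm (hsAdj N) (s k) (t' k)) := by
          intro s
          rw [_root_.map_mul, map_pow, map_inv₀, Complex.conj_ofReal, ← h]
          ring
        simp only [hcoef]
        rw [← Finset.mul_sum, mul_assoc]
      · intro A _ hA
        rw [if_neg (fun hc => hA hc.1.symm), mul_zero, mul_zero]
      · intro hmem
        exact absurd (Finset.mem_univ _) hmem
    · rw [design_cross hWu hdes _ h, mul_zero]
      symm
      refine Finset.sum_eq_zero fun A _ => ?_
      rw [if_neg (fun hc => h (hc.1.trans hc.2.symm)), mul_zero, mul_zero]
  simp only [hRHS, Finset.mul_sum, step]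
  exact Eq.trans (Finset.sum_congr rfl fun t _ => Finset.sum_comm) Finset.sum_comm


lemma frobSq_obsOf {n : ℕ} (b : (Fin n → Fin 4) → ℝ) :
    frobSq (obsOf b) = ∑ s, (b s)^2 := by
  unfold obsOf
  rw [frobSq_sum_smul]
  simp [Complex.normSq_ofReal, sq]

lemma empty_case {n : ℕ} {ι : Type*} [Fintype ι] (w : ι → ℝ) (W : ι → QMat)
    (hWu : ∀ i, IsUnitary (W i)) (hw1 : ∑ i, w i = 1)
    {N : QMat → QMat} (hNtr : ∀ M, Matrix.trace (N M) = Matrix.trace M)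
    (a : (Fin n → Fin 4) → ℝ) :
    ∑ f : Fin n → ι, (∏ k, w (f k)) * frobSq (tensorPow n (hsAdj N)
        ((qprod fun k => W (f k))ᴴ *
          obsOf (fun s => if psupp s = (∅ : Finset (Fin n)) then a s else 0) *
          qprod fun k => W (f k)))
      = frobSq (obsOf (fun s => if psupp s = (∅ : Finset (Fin n)) then a s else 0)) := by
  classical
  have hψz : psupp (fun _ => (0:Fin 4) : Fin n → Fin 4) = (∅ : Finset (Fin n)) :=
    (psupp_eq_empty_iff _).mpr rfl
  have hc : ∀ (f : Fin n → ι) (t : Fin n → Fin 4),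
      coeff t ((qprod fun k => W (f k))ᴴ *
        obsOf (fun s => if psupp s = (∅ : Finset (Fin n)) then a s else 0) *
        qprod fun k => W (f k))
      = if t = (fun _ => 0) then ((a (fun _ => 0) : ℝ) : ℂ) else 0 := by
    intro f t
    by_cases ht : t = fun _ => 0
    · subst ht
      rw [if_pos rfl, coeff_conj_obs_expand, Finset.sum_eq_single (fun _ => (0:Fin 4))]
      · rw [if_pos hψz]
        have htr : Matrix.trace (pauliString (fun _ => (0:Fin 4)) *
            ((qprod fun k => W (f k))ᴴ * pauliString (fun _ => (0:Fin 4)) *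
              qprod fun k => W (f k))) = (2:ℂ)^n := by
          rw [trace_pauli_conj_pauli]
          have h1 : ∀ k : Fin n, Matrix.trace (pauli ((fun _ => (0:Fin 4)) k) *
              ((W (f k))ᴴ * pauli ((fun _ => (0:Fin 4)) k) * W (f k))) = 2 := by
            intro k
            show Matrix.trace (pauli 0 * ((W (f k))ᴴ * pauli 0 * W (f k))) = 2
            rw [pauli_zero, Matrix.one_mul, Matrix.mul_one, (hWu (f k)).2, Matrix.trace_one]
            simp
          rw [Finset.prod_congr rfl fun k _ => h1 k, Finset.prod_const]
          simp
        rw [htr, div_self two_pow_ne, mul_one]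
      · intro s _ hs
        rw [if_neg (fun e => hs ((psupp_eq_empty_iff s).mp e))]
        simp
      · intro hmem
        exact absurd (Finset.mem_univ _) hmem
    · rw [coeff_conj_obs_restrict _ (fun k => hWu (f k)) a ∅ t,
        if_neg (fun e => ht ((psupp_eq_empty_iff t).mp e)), if_neg ht]
  have hfrob : ∀ f : Fin n → ι,
      frobSq (tensorPow n (hsAdj N)
        ((qprod fun k => W (f k))ᴴ *
          obsOf (fun s => if psupp s = (∅ : Finset (Fin n)) then a s else 0) *
          qprod fun k => W (f k)))
      = (a (fun _ => 0))^2 := by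
    intro f
    rw [show tensorPow n (hsAdj N)
        ((qprod fun k => W (f k))ᴴ *
          obsOf (fun s => if psupp s = (∅ : Finset (Fin n)) then a s else 0) *
          qprod fun k => W (f k))
      = tensorMap (fun _ => hsAdj N)
        ((qprod fun k => W (f k))ᴴ *
          obsOf (fun s => if psupp s = (∅ : Finset (Fin n)) then a s else 0) *
          qprod fun k => W (f k)) from rfl, frobSq_tensorMap]
    have hsum : ∀ s : Fin n → Fin 4,
        (∑ t, (∏ k, ptm (hsAdj N) (s k) (t k)) * coeff t
          ((qprod fun k => W (f k))ᴴ *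
            obsOf (fun s' => if psupp s' = (∅ : Finset (Fin n)) then a s' else 0) *
            qprod fun k => W (f k)))
        = if s = (fun _ => 0) then ((a (fun _ => 0) : ℝ) : ℂ) else 0 := by
      intro s
      rw [Finset.sum_eq_single (fun _ => (0:Fin 4))]
      · rw [hc f _, if_pos rfl]
        have hT : (∏ k, ptm (hsAdj N) (s k) ((fun _ => (0:Fin 4)) k))
            = if s = (fun _ => 0) then (1:ℂ) else 0 := by
          simp only [ptm_hsAdj_zero hNtr]
          by_cases hs : s = fun _ => 0
          · rw [if_pos hs]
            exact Finset.prod_eq_one fun k _ => if_pos (congrFun hs k)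
          · rw [if_neg hs]
            obtain ⟨k, hk⟩ := Function.ne_iff.mp hs
            exact Finset.prod_eq_zero (Finset.mem_univ k) (if_neg hk)
        rw [hT]
        by_cases hs : s = fun _ => 0 <;> simp [hs]
      · intro t _ ht
        rw [hc f t, if_neg ht, mul_zero]
      · intro hmem
        exact absurd (Finset.mem_univ _) hmem
    simp only [hsum]
    rw [Finset.sum_congr rfl (g := fun s => if s = (fun _ => 0) then (a (fun _ => 0))^2 else 0)
      (fun s _ => by by_cases hs : s = (fun _ => (0:Fin 4)) <;>
        simp [hs, Complex.normSq_ofReal, sq])]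
    rw [Finset.sum_ite_eq' Finset.univ (fun _ => (0:Fin 4)) fun _ => (a (fun _ => 0))^2]
    simp
  rw [Finset.sum_congr rfl fun f _ => by rw [hfrob f]]
  rw [← Finset.sum_mul, sum_prod_w hw1, one_mul, frobSq_obsOf]
  rw [Finset.sum_congr rfl (g := fun s => if s = (fun _ => 0) then (a (fun _ => 0))^2 else 0)
    (fun s _ => by
      by_cases hs : psupp s = (∅ : Finset (Fin n))
      · have : s = fun _ => 0 := (psupp_eq_empty_iff s).mp hs
        simp [hs, this, hψz]
      · have : ¬ s = fun _ => 0 := fun e => hs ((psupp_eq_empty_iff s).mpr e)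
        simp [hs, this])]
  rw [Finset.sum_ite_eq' Finset.univ (fun _ => (0:Fin 4)) fun _ => (a (fun _ => 0))^2]
  simp


/-- (The non-physical map `Ñ_p` does not increase the Frobenius norm on
average.) With `p = 1 - χ` and `Ñ_p†(I) = I`, `Ñ_p†(σ) = N†(σ)/(1-p)` for `σ ∈ {X,Y,Z}`:
`E_{V ~ D_s^{⊗n}} ‖Ñ_p^{†⊗n}(Vᴴ O V)‖_F² ≤ ‖O‖_F²`. -/
theorem stmt_7 (n : ℕ) (N : QMat → QMat) (hN : IsChannel N)
    {ι : Type*} [Fintype ι] (w : ι → ℝ) (W : ι → QMat)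
    (hw0 : ∀ i, 0 ≤ w i) (hw1 : ∑ i, w i = 1)
    (hWu : ∀ i, IsUnitary (W i)) (hdes : IsOneDesign w W)
    (χ : ℝ) (hχ0 : 0 < χ) (hχ1 : χ ≤ 1)
    (hcontr : ∀ A : Finset (Fin n), A.Nonempty → ∀ b : (Fin n → Fin 4) → ℝ,
      (∀ s, psupp s ≠ A → b s = 0) →
      ∑ f : Fin n → ι, (∏ k, w (f k)) *
          frobSq (tensorPow n (hsAdj N)
            ((qprod fun k => W (f k))ᴴ * obsOf b * qprod fun k => W (f k))) ≤
        χ ^ (2 * A.card) * frobSq (obsOf b))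
    (p : ℝ) (hp : p = 1 - χ)
    (tAdj : QMat → QMat)
    (htAdj : ∀ M, tAdj M = (Matrix.trace M / 2) • (1 : QMat) +
      ∑ i : Fin 3, (Matrix.trace (pauliXYZ i * M) / 2) •
        (((1 : ℂ) - (p : ℂ))⁻¹ • hsAdj N (pauliXYZ i)))
    (a : (Fin n → Fin 4) → ℝ) :
    ∑ f : Fin n → ι, (∏ k, w (f k)) *
        frobSq (tensorPow n tAdj
          ((qprod fun k => W (f k))ᴴ * obsOf a * qprod fun k => W (f k))) ≤
      frobSq (obsOf a) := by
  classical
  have hχne : χ ≠ 0 := ne_of_gt hχ0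
  have hreal : ∑ f : Fin n → ι, (∏ k, w (f k)) *
        frobSq (tensorPow n tAdj
          ((qprod fun k => W (f k))ᴴ * obsOf a * qprod fun k => W (f k)))
      = ∑ A : Finset (Fin n), (χ⁻¹)^(2 * A.card) *
          (∑ f : Fin n → ι, (∏ k, w (f k)) * frobSq (tensorPow n (hsAdj N)
            ((qprod fun k => W (f k))ᴴ * obsOf (fun s => if psupp s = A then a s else 0) *
              qprod fun k => W (f k)))) := by
    apply Complex.ofReal_injective
    rw [main_identity w W hWu hdes hN.tracePreserving hp htAdj a]
    push_cast
    rfl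
  rw [hreal]
  have hbound : ∀ A : Finset (Fin n),
      (χ⁻¹)^(2 * A.card) * (∑ f : Fin n → ι, (∏ k, w (f k)) * frobSq (tensorPow n (hsAdj N)
        ((qprod fun k => W (f k))ᴴ * obsOf (fun s => if psupp s = A then a s else 0) *
          qprod fun k => W (f k))))
      ≤ ∑ s : Fin n → Fin 4, (if psupp s = A then a s else 0)^2 := by
    intro A
    rcases A.eq_empty_or_nonempty with rfl | hA
    · rw [empty_case w W hWu hw1 hN.tracePreserving a, Finset.card_empty, Nat.mul_zero,
        pow_zero, one_mul, frobSq_obsOf]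
    · have hb : ∀ s, psupp s ≠ A → (if psupp s = A then a s else 0) = 0 :=
        fun s hs => if_neg hs
      calc (χ⁻¹)^(2 * A.card) * (∑ f : Fin n → ι, (∏ k, w (f k)) *
            frobSq (tensorPow n (hsAdj N)
              ((qprod fun k => W (f k))ᴴ *
                obsOf (fun s => if psupp s = A then a s else 0) * qprod fun k => W (f k))))
          ≤ (χ⁻¹)^(2 * A.card) * (χ ^ (2 * A.card) *
              frobSq (obsOf (fun s => if psupp s = A then a s else 0))) := by
            apply mul_le_mul_of_nonneg_left
              (hcontr A hA (fun s => if psupp s = A then a s else 0) hb)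
            positivity
        _ = frobSq (obsOf (fun s => if psupp s = A then a s else 0)) := by
            rw [← mul_assoc, ← mul_pow, inv_mul_cancel₀ hχne, one_pow, one_mul]
        _ = ∑ s : Fin n → Fin 4, (if psupp s = A then a s else 0)^2 := frobSq_obsOf _
  calc ∑ A : Finset (Fin n), (χ⁻¹)^(2 * A.card) *
        (∑ f : Fin n → ι, (∏ k, w (f k)) * frobSq (tensorPow n (hsAdj N)
          ((qprod fun k => W (f k))ᴴ * obsOf (fun s => if psupp s = A then a s else 0) *
            qprod fun k => W (f k))))
      ≤ ∑ A : Finset (Fin n), ∑ s : Fin n → Fin 4, (if psupp s = A then a s else 0)^2 :=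
        Finset.sum_le_sum fun A _ => hbound A
    _ = frobSq (obsOf a) := by
        rw [Finset.sum_comm, frobSq_obsOf]
        refine Finset.sum_congr rfl fun s _ => ?_
        rw [Finset.sum_congr rfl (g := fun A => if psupp s = A then (a s)^2 else 0)
          (fun A _ => by by_cases h : psupp s = A <;> simp [h]),
          Finset.sum_ite_eq]
        simp

end
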